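/- There exists R₀ > 1 such that for all R > R₀: for every w ∈ ℂ³ the limit G⁻(w) = lim_{n→∞} 3^{−n} log⁺‖H⁻ⁿ(w)‖ exists; the function G⁻ satisfies G⁻(H⁻¹(w)) = 3·G⁻(w) for all w ∈ ℂ³, and G⁻(w) = 0 if and only if w ∈ K⁻. -/

import Mathlib

open Complex Filter Topology
set_option maxHeartbeats 1000000

/-- The quadratic automorphism `H(x,y,z) = (xy + az, x² + by, x)` of `ℂ³`. -/
noncomputable def H (a b : ℂ) (w : ℂ × ℂ × ℂ) : ℂ × ℂ × ℂ :=
  (w.1 * w.2.1 + a * w.2.2, w.1 ^ 2 + b * w.2.1, w.1)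

/-- The inverse automorphism
`H⁻¹(x,y,z) = (z, (y − z²)/b, (x − z(y − z²)/b)/a)`. -/
noncomputable def Hinv (a b : ℂ) (w : ℂ × ℂ × ℂ) : ℂ × ℂ × ℂ :=
  (w.2.2, (w.2.1 - w.2.2 ^ 2) / b,
    (w.1 - w.2.2 * ((w.2.1 - w.2.2 ^ 2) / b)) / a)

/-- `V⁺ = {(x,y,z) : |z| > max{R, |x|, (1+δ)|y|^{1/2}}}`. -/
def Vplus (δ R : ℝ) : Set (ℂ × ℂ × ℂ) :=
  {w | ‖w.2.2‖ >
    max R (max (‖w.1‖) ((1 + δ) * Real.sqrt (‖w.2.1‖)))}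

/-- `U⁻ = ⋃_{n≥0} Hⁿ(V⁺)`. -/
noncomputable def Uminus (a b : ℂ) (δ R : ℝ) : Set (ℂ × ℂ × ℂ) :=
  ⋃ n : ℕ, (H a b)^[n] '' Vplus δ R

/-- `K⁻ = ℂ³ \ U⁻`. -/
noncomputable def Kminus (a b : ℂ) (δ R : ℝ) : Set (ℂ × ℂ × ℂ) :=
  (Uminus a b δ R)ᶜ

namespace Stmt6Aux


noncomputable def alp (a : ℂ) (δ : ℝ) : ℝ :=
  (δ * (δ + 2) / (1 + δ) ^ 3) / (2 * ‖a‖)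

noncomputable def bet (a : ℂ) : ℝ := 3 / ‖a‖

lemma alp_pos {a : ℂ} (ha : a ≠ 0) {δ : ℝ} (hδ : 0 < δ) : 0 < alp a δ := by
  have : 0 < ‖a‖ := norm_pos_iff.mpr ha
  unfold alp; positivity

lemma bet_pos {a : ℂ} (ha : a ≠ 0) : 0 < bet a := by
  have : 0 < ‖a‖ := norm_pos_iff.mpr ha
  unfold bet; positivity

lemma key_step (a b : ℂ) (ha : a ≠ 0) {δ R : ℝ} (hδ : 0 < δ)
    (hbδ : ‖b‖ = 1 + δ) (hR1 : 1 < R)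
    (hRc : 2 ≤ (δ * (δ + 2) / (1 + δ) ^ 3) * R)
    (hRα : (1 + δ) * Real.sqrt 2 + 2 ≤ alp a δ * R)
    (w : ℂ × ℂ × ℂ) (hw : w ∈ Vplus δ R) :
    Hinv a b w ∈ Vplus δ R ∧ ‖Hinv a b w‖ = ‖(Hinv a b w).2.2‖ ∧
    alp a δ * (‖w.2.2‖) ^ 3 ≤ ‖(Hinv a b w).2.2‖ ∧
    ‖(Hinv a b w).2.2‖ ≤ bet a * (‖w.2.2‖) ^ 3 := by
  obtain ⟨x, y, z⟩ := w
  simp only [Vplus, Set.mem_setOf_eq, gt_iff_lt, max_lt_iff] at hw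
  obtain ⟨hRz, hxz, hyz⟩ := hw
  have hA : 0 < ‖a‖ := norm_pos_iff.mpr ha
  have hδ1 : (0:ℝ) < 1 + δ := by linarith
  have hz1 : 1 < ‖z‖ := lt_trans hR1 hRz
  have hz0 : 0 < ‖z‖ := by linarith
  set X := ‖x‖ with hX
  set Y := ‖y‖ with hY
  set Z := ‖z‖ with hZ
  have hY0 : 0 ≤ Y := norm_nonneg y
  have hX0 : 0 ≤ X := norm_nonneg x
  clear_value X Y Z
  -- (1+δ)^2 * Y < Z^2
  have hy2 : (1 + δ) ^ 2 * Y < Z ^ 2 := by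
    have h1 : (1 + δ) * Real.sqrt Y < Z := hyz
    have h2 : ((1 + δ) * Real.sqrt Y) ^ 2 < Z ^ 2 := by
      apply pow_lt_pow_left₀ h1 (by positivity)
      norm_num
    calc (1 + δ) ^ 2 * Y = ((1 + δ) * Real.sqrt Y) ^ 2 := by
          rw [mul_pow, Real.sq_sqrt hY0]
      _ < Z ^ 2 := h2
  have hyZ2 : Y < Z ^ 2 := by nlinarith [mul_nonneg hY0 (by positivity : (0:ℝ) ≤ δ * (δ + 2))]
  -- the image components
  set v : ℂ := (y - z ^ 2) / b with hv
  set u : ℂ := (x - z * ((y - z ^ 2) / b)) / a with hu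
  have hvabs : ‖v‖ = ‖y - z ^ 2‖ / (1 + δ) := by
    rw [hv, norm_div, hbδ]
  set c1 : ℝ := δ * (δ + 2) / (1 + δ) ^ 3 with hc1
  have hc1pos : 0 < c1 := by positivity
  -- lower bound on |v|
  have hsub_lb : Z ^ 2 - Y ≤ ‖y - z ^ 2‖ := by
    rw [hY, hZ]
    have h1 := norm_sub_norm_le (z ^ 2) y
    rw [norm_pow] at h1
    calc ‖z‖ ^ 2 - ‖y‖ ≤ ‖z ^ 2 - y‖ := h1
      _ = ‖y - z ^ 2‖ := norm_sub_rev _ _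
  have hsub_ub : ‖y - z ^ 2‖ ≤ Y + Z ^ 2 := by
    rw [hY, hZ]
    have := norm_sub_le y (z ^ 2)
    rwa [norm_pow] at this
  have hv_lb : c1 * Z ^ 2 ≤ ‖v‖ := by
    have h4 : c1 * Z ^ 2 * (1 + δ) ≤ Z ^ 2 - Y := by
      rw [show c1 * Z ^ 2 * (1 + δ) = δ * (δ + 2) * Z ^ 2 / (1 + δ) ^ 2 from by
        rw [hc1]; field_simp]
      rw [div_le_iff₀ (by positivity)]
      nlinarith [hy2]
    rw [hvabs, le_div_iff₀ hδ1]
    linarith [hsub_lb, h4]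
  have hv_ub : ‖v‖ ≤ 2 * Z ^ 2 := by
    rw [hvabs, div_le_iff₀ hδ1]
    nlinarith [hsub_ub, hyZ2]
  have huabs : ‖u‖ = ‖x - z * v‖ / ‖a‖ := by
    rw [hu, ← hv, norm_div]
  have hu_lb' : Z * ‖v‖ - X ≤ ‖x - z * v‖ := by
    rw [hX, hZ]
    have h1 := norm_sub_norm_le (z * v) x
    simp only [norm_mul] at h1
    calc ‖z‖ * ‖v‖ - ‖x‖ ≤ ‖z * v - x‖ := h1
      _ = ‖x - z * v‖ := norm_sub_rev _ _
  have hu_ub' : ‖x - z * v‖ ≤ X + Z * ‖v‖ := by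
    rw [hX, hZ]
    have h1 := norm_sub_le (x : ℂ) (z * v)
    simp only [norm_mul] at h1
    exact h1
  have hc1z2 : 2 ≤ c1 * Z ^ 2 := by nlinarith [hRc, hRz, hz1, hc1pos]
  have halpZ : alp a δ * Z ^ 3 * ‖a‖ = c1 * Z ^ 3 / 2 := by
    unfold alp; rw [← hc1]; field_simp
  have hbetZ : bet a * Z ^ 3 * ‖a‖ = 3 * Z ^ 3 := by
    unfold bet; field_simp
  have hu_lb : alp a δ * Z ^ 3 ≤ ‖u‖ := by
    rw [huabs, le_div_iff₀ hA]
    rw [halpZ]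
    have h2 : Z * (c1 * Z ^ 2) ≤ Z * ‖v‖ :=
      mul_le_mul_of_nonneg_left hv_lb hz0.le
    have h3 : 2 * Z ≤ c1 * Z ^ 2 * Z := mul_le_mul_of_nonneg_right hc1z2 hz0.le
    linarith [hu_lb', hxz]
  have hu_ub : ‖u‖ ≤ bet a * Z ^ 3 := by
    rw [huabs, div_le_iff₀ hA, hbetZ]
    have h2 : Z * ‖v‖ ≤ Z * (2 * Z ^ 2) :=
      mul_le_mul_of_nonneg_left hv_ub hz0.le
    have h4 : Z ≤ Z ^ 3 := by nlinarith [hz1, hz0]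
    linarith [hu_ub', hxz]
  have hαpos : 0 < alp a δ := alp_pos ha hδ
  have hαR2 : 2 ≤ alp a δ * R := by
    have := mul_nonneg hδ1.le (Real.sqrt_nonneg 2)
    linarith [hRα]
  have hαZ : 2 ≤ alp a δ * Z := by
    have h5 : alp a δ * R ≤ alp a δ * Z := mul_le_mul_of_nonneg_left hRz.le hαpos.le
    linarith
  have huZ2 : 2 * Z ^ 2 ≤ alp a δ * Z ^ 3 := by
    have h6 : 2 * Z ^ 2 ≤ alp a δ * Z * Z ^ 2 :=
      mul_le_mul_of_nonneg_right hαZ (sq_nonneg Z)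
    linarith [h6]
  have hu_gt_z : Z < ‖u‖ := by
    have h7 : Z < 2 * Z ^ 2 := by nlinarith [hz1, hz0]
    linarith [hu_lb, huZ2]
  have hu_gt_R : R < ‖u‖ := lt_trans hRz hu_gt_z
  have hsv : Real.sqrt (‖v‖) ≤ Real.sqrt 2 * Z := by
    calc Real.sqrt (‖v‖) ≤ Real.sqrt (2 * Z ^ 2) := Real.sqrt_le_sqrt hv_ub
      _ = Real.sqrt 2 * Z := by
          rw [Real.sqrt_mul (by norm_num), Real.sqrt_sq hz0.le]
  have hu_gt_s : (1 + δ) * Real.sqrt (‖v‖) < ‖u‖ := by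
    have h1 : (1 + δ) * Real.sqrt (‖v‖) ≤ (1 + δ) * Real.sqrt 2 * Z := by
      have := mul_le_mul_of_nonneg_left hsv hδ1.le
      linarith
    have h2 : (1 + δ) * Real.sqrt 2 * Z < alp a δ * Z ^ 3 := by
      have h8 : alp a δ * (R * Z) ≤ alp a δ * (Z * Z) :=
        mul_le_mul_of_nonneg_left (by nlinarith [hRz, hz0]) hαpos.le
      have h9 : ((1 + δ) * Real.sqrt 2 + 2) * Z ≤ alp a δ * R * Z :=
        mul_le_mul_of_nonneg_right hRα hz0.le
      have h10 : alp a δ * Z ^ 2 ≤ alp a δ * Z ^ 3 :=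
        mul_le_mul_of_nonneg_left (pow_le_pow_right₀ hz1.le (by norm_num)) hαpos.le
      nlinarith [hz0]
    linarith [hu_lb]
  have hv_le_u : ‖v‖ ≤ ‖u‖ := by linarith [hv_ub, huZ2, hu_lb]
  have hcomp1 : (Hinv a b (x, y, z)).1 = z := rfl
  have hcomp2 : (Hinv a b (x, y, z)).2.1 = v := rfl
  have hcomp3 : (Hinv a b (x, y, z)).2.2 = u := rfl
  refine ⟨?_, ?_, ?_, ?_⟩
  · simp only [Vplus, Set.mem_setOf_eq, hcomp1, hcomp2, hcomp3, gt_iff_lt, max_lt_iff]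
    exact ⟨hu_gt_R, hZ ▸ hu_gt_z, hu_gt_s⟩
  · rw [Prod.norm_def, Prod.norm_def, hcomp3]
    simp only [hcomp1, hcomp2]
    rw [max_eq_right hv_le_u, ← hZ, max_eq_right hu_gt_z.le]
  · rw [hcomp3]; exact hu_lb
  · rw [hcomp3]; exact hu_ub


lemma Hinv_H (a b : ℂ) (ha : a ≠ 0) (hb : b ≠ 0) :
    Function.LeftInverse (Hinv a b) (H a b) := by
  intro w
  obtain ⟨x, y, z⟩ := w
  simp only [Hinv, H]
  have h2 : (x ^ 2 + b * y - x ^ 2) / b = y := by field_simp; ring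
  rw [h2]
  have h3 : (x * y + a * z - x * y) / a = z := by field_simp; ring
  rw [h3]

lemma H_Hinv (a b : ℂ) (ha : a ≠ 0) (hb : b ≠ 0) :
    Function.LeftInverse (H a b) (Hinv a b) := by
  intro w
  obtain ⟨x, y, z⟩ := w
  simp only [Hinv, H]
  have h1 : a * ((x - z * ((y - z ^ 2) / b)) / a) = x - z * ((y - z ^ 2) / b) := by
    field_simp
  have h2 : b * ((y - z ^ 2) / b) = y - z ^ 2 := by field_simp
  rw [h1, h2]
  rw [Prod.mk.injEq, Prod.mk.injEq]
  exact ⟨by ring, by ring, rfl⟩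

lemma mem_Uminus_iff (a b : ℂ) (ha : a ≠ 0) (hb : b ≠ 0) (δ R : ℝ) (w : ℂ × ℂ × ℂ) :
    w ∈ Uminus a b δ R ↔ ∃ n, (Hinv a b)^[n] w ∈ Vplus δ R := by
  unfold Uminus
  simp only [Set.mem_iUnion, Set.mem_image]
  constructor
  · rintro ⟨n, v, hv, rfl⟩
    exact ⟨n, by rw [(Hinv_H a b ha hb).iterate n _]; exact hv⟩
  · rintro ⟨n, hn⟩
    exact ⟨n, (Hinv a b)^[n] w, hn, (H_Hinv a b ha hb).iterate n w⟩

lemma escape (a b : ℂ) (ha : a ≠ 0) {δ R : ℝ} (hδ : 0 < δ)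
    (hbδ : ‖b‖ = 1 + δ) (hR1 : 1 < R)
    (hRc : 2 ≤ (δ * (δ + 2) / (1 + δ) ^ 3) * R)
    (hRα : (1 + δ) * Real.sqrt 2 + 2 ≤ alp a δ * R)
    (hRlog : |Real.log (alp a δ)| / 3 +
      max |Real.log (alp a δ)| |Real.log (bet a)| / 6 + 1 ≤ Real.log R)
    (w : ℂ × ℂ × ℂ) (hw : w ∈ Vplus δ R) :
    ∃ L, 1 ≤ L ∧ Tendsto
      (fun n : ℕ => max (Real.log ‖(Hinv a b)^[n] w‖) 0 / 3 ^ n)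
      atTop (𝓝 L) := by
  have hαpos := alp_pos ha hδ
  have hβpos := bet_pos ha
  set K := max |Real.log (alp a δ)| |Real.log (bet a)| with hK
  have hK0 : 0 ≤ K := le_trans (abs_nonneg _) (le_max_left _ _)
  have hla : -K ≤ Real.log (alp a δ) := by
    have h1 : |Real.log (alp a δ)| ≤ K := le_max_left _ _
    have h2 := neg_abs_le (Real.log (alp a δ))
    linarith
  have hlb2 : Real.log (bet a) ≤ K :=
    le_trans (le_abs_self _) (le_max_right _ _)
  set g := Hinv a b with hg
  have hmem : ∀ n, g^[n] w ∈ Vplus δ R := by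
    intro n
    induction n with
    | zero => exact hw
    | succ n ih =>
      rw [Function.iterate_succ_apply']
      exact (key_step a b ha hδ hbδ hR1 hRc hRα _ ih).1
  set Zn : ℕ → ℝ := fun n => ‖((g^[n] w)).2.2‖ with hZn
  have hZR : ∀ n, R < Zn n := fun n => lt_of_le_of_lt (le_max_left _ _) (hmem n)
  have hZ1 : ∀ n, 1 < Zn n := fun n => lt_trans hR1 (hZR n)
  have hZ0 : ∀ n, 0 < Zn n := fun n => lt_trans one_pos (hZ1 n)
  have hstep := fun n => key_step a b ha hδ hbδ hR1 hRc hRα _ (hmem n)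
  have hnorm : ∀ n, ‖g^[n+1] w‖ = Zn (n+1) := by
    intro n
    have := (hstep n).2.1
    rw [← hg, ← Function.iterate_succ_apply' g n w] at this
    exact this
  have hlb : ∀ n, alp a δ * Zn n ^ 3 ≤ Zn (n+1) := by
    intro n
    have := (hstep n).2.2.1
    rwa [← hg, ← Function.iterate_succ_apply' g n w] at this
  have hub : ∀ n, Zn (n+1) ≤ bet a * Zn n ^ 3 := by
    intro n
    have := (hstep n).2.2.2
    rwa [← hg, ← Function.iterate_succ_apply' g n w] at this
  have hlog3 : ∀ n, Real.log (alp a δ) + 3 * Real.log (Zn n) ≤ Real.log (Zn (n+1)) ∧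
      Real.log (Zn (n+1)) ≤ Real.log (bet a) + 3 * Real.log (Zn n) := by
    intro n
    constructor
    · calc Real.log (alp a δ) + 3 * Real.log (Zn n)
          = Real.log (alp a δ * Zn n ^ 3) := by
            rw [Real.log_mul (ne_of_gt hαpos) (pow_ne_zero 3 (ne_of_gt (hZ0 n))),
              Real.log_pow]
            norm_num
      _ ≤ Real.log (Zn (n+1)) :=
          Real.log_le_log (mul_pos hαpos (pow_pos (hZ0 n) 3)) (hlb n)
    · calc Real.log (Zn (n+1)) ≤ Real.log (bet a * Zn n ^ 3) :=
          Real.log_le_log (hZ0 _) (hub n)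
      _ = Real.log (bet a) + 3 * Real.log (Zn n) := by
          rw [Real.log_mul (ne_of_gt hβpos) (pow_ne_zero 3 (ne_of_gt (hZ0 n))),
            Real.log_pow]
          norm_num
  set f : ℕ → ℝ := fun n => max (Real.log ‖g^[n] w‖) 0 / 3 ^ n with hf
  have hfn : ∀ n, f (n+1) = Real.log (Zn (n+1)) / 3 ^ (n+1) := by
    intro n
    rw [hf]
    simp only
    rw [hnorm n, max_eq_left (Real.log_nonneg (hZ1 _).le)]
  have hdiff : ∀ n, dist (f (n+1)) (f (n+2)) ≤ K / 3 ^ (n+2) := by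
    intro n
    rw [hfn n, hfn (n+1), Real.dist_eq]
    have h1 := (hlog3 (n+1)).1
    have h2 := (hlog3 (n+1)).2
    have h3 : Real.log (Zn (n+1)) / 3 ^ (n+1) - Real.log (Zn (n+2)) / 3 ^ (n+2)
        = (3 * Real.log (Zn (n+1)) - Real.log (Zn (n+2))) / 3 ^ (n+2) := by
      field_simp
      ring
    rw [h3, abs_div, abs_of_pos (by positivity : (0:ℝ) < 3 ^ (n+2))]
    gcongr
    rw [abs_le]
    constructor <;> linarith
  set C := max K (dist (f 0) (f 1)) with hC
  have hC0 : 0 ≤ C := le_trans hK0 (le_max_left _ _)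
  have hKC : K ≤ C := le_max_left _ _
  have hgeo : ∀ n, dist (f n) (f (n+1)) ≤ C * (1/3) ^ n := by
    intro n
    match n with
    | 0 =>
      rw [pow_zero, mul_one]
      exact le_max_right _ _
    | Nat.succ m =>
      calc dist (f (m+1)) (f (m+2)) ≤ K / 3 ^ (m+2) := hdiff m
        _ ≤ C * (1/3) ^ (m+1) := by
            rw [show (C * (1/3) ^ (m+1) : ℝ) = C / 3 ^ (m+1) by
              rw [one_div, inv_pow, div_eq_mul_inv]]
            rw [div_le_div_iff₀ (by positivity) (by positivity)]
            have hp : (3:ℝ) ^ (m+1) ≤ 3 ^ (m+2) := by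
              apply pow_le_pow_right₀ (by norm_num)
              omega
            nlinarith [pow_pos (show (0:ℝ) < 3 by norm_num) (m+1)]
  have hcauchy : CauchySeq f := cauchySeq_of_le_geometric (1/3) C (by norm_num) hgeo
  obtain ⟨L, hL⟩ := cauchySeq_tendsto_of_complete hcauchy
  refine ⟨L, ?_, hL⟩
  have hshift : Tendsto (fun n => f (n+1)) atTop (𝓝 L) :=
    hL.comp (tendsto_add_atTop_nat 1)
  have hgeo2 : ∀ n, dist (f (n+1)) (f (n+1+1)) ≤ (K/9) * (1/3) ^ n := by
    intro n
    calc dist (f (n+1)) (f (n+2)) ≤ K / 3 ^ (n+2) := hdiff n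
      _ = (K/9) * (1/3) ^ n := by
          rw [show ((3:ℝ) ^ (n+2)) = 9 * 3 ^ n by ring]
          field_simp
          rw [mul_assoc, ← mul_pow]; norm_num
  have hd0 : dist (f 1) L ≤ (K/9) / (1 - 1/3) :=
    dist_le_of_le_geometric_of_tendsto₀ (1/3) (K/9) (by norm_num) hgeo2 hshift
  have hK6 : dist (f 1) L ≤ K / 6 := by
    have he : ((K/9) / (1 - 1/3) : ℝ) = K / 6 := by
      rw [div_div]
      norm_num
    linarith [hd0, he.le]
  have hf1 : Real.log R - |Real.log (alp a δ)| / 3 ≤ f 1 := by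
    rw [hfn 0]
    have h1 := (hlog3 0).1
    have hZ0log : Real.log R ≤ Real.log (Zn 0) :=
      Real.log_le_log (by linarith) (hZR 0).le
    have hla2 : -|Real.log (alp a δ)| ≤ Real.log (alp a δ) := neg_abs_le _
    rw [show ((3:ℝ) ^ (0+1)) = 3 by norm_num, le_div_iff₀ (by norm_num : (0:ℝ) < 3)]
    linarith
  have hdL : f 1 - L ≤ K / 6 := by
    have := le_abs_self (f 1 - L)
    rw [← Real.dist_eq] at this
    linarith
  linarith [hRlog, hf1, hdL]

lemma bounded (a b : ℂ) (ha : a ≠ 0) (hb : b ≠ 0) {δ R : ℝ} (hδ : 0 < δ)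
    (hbδ : ‖b‖ = 1 + δ) (hR1 : 1 < R) (w : ℂ × ℂ × ℂ)
    (hnot : ∀ n, (Hinv a b)^[n] w ∉ Vplus δ R) :
    Tendsto (fun n : ℕ => max (Real.log ‖(Hinv a b)^[n] w‖) 0 / 3 ^ n)
      atTop (𝓝 0) := by
  set g := Hinv a b with hg
  set C1 : ℝ := 3 + (1 + δ) * Real.sqrt 2 with hC1
  have hs2 : (1:ℝ) ≤ Real.sqrt 2 := by
    rw [show (1:ℝ) = Real.sqrt 1 by simp]
    exact Real.sqrt_le_sqrt (by norm_num)
  have hC1_3 : 3 ≤ C1 := by nlinarith [Real.sqrt_nonneg 2, hδ]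
  set N : ℕ → ℝ := fun n => max ‖g^[n] w‖ R with hN
  have hN1 : ∀ n, 1 < N n := fun n => lt_of_lt_of_le hR1 (le_max_right _ _)
  have hNw : ∀ n, ‖g^[n] w‖ ≤ N n := fun n => le_max_left _ _
  have hNR : ∀ n, R ≤ N n := fun n => le_max_right _ _
  have hN0 : ∀ n, 0 < N n := fun n => lt_trans one_pos (hN1 n)
  have hδ1 : (0:ℝ) < 1 + δ := by linarith
  have hstep : ∀ n, N (n+1) ≤ C1 * N n ^ 2 := by
    intro n
    have hM1 : 1 < N n := hN1 n
    have hM0 : 0 < N n := hN0 n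
    have hx : ‖(g^[n] w).1‖ ≤ N n := le_trans (norm_fst_le _) (hNw n)
    have hy : ‖(g^[n] w).2.1‖ ≤ N n :=
      le_trans (le_trans (norm_fst_le _) (norm_snd_le _)) (hNw n)
    have hz : ‖(g^[n] w).2.2‖ ≤ N n :=
      le_trans (le_trans (norm_snd_le _) (norm_snd_le _)) (hNw n)
    set v : ℂ := ((g^[n] w).2.1 - (g^[n] w).2.2 ^ 2) / b with hv
    set u : ℂ := ((g^[n] w).1 - (g^[n] w).2.2 * v) / a with hu
    have hgp : g^[n+1] w = ((g^[n] w).2.2, v, u) := by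
      rw [Function.iterate_succ_apply']
      rw [hv, hu, hg]
      rfl
    have hvb : ‖v‖ ≤ 2 * N n ^ 2 := by
      rw [hv, norm_div]
      have hbnorm : ‖b‖ = 1 + δ := by rw [hbδ]
      rw [hbnorm]
      have h1 : ‖(g^[n] w).2.1 - (g^[n] w).2.2 ^ 2‖ ≤ N n + N n ^ 2 := by
        calc ‖(g^[n] w).2.1 - (g^[n] w).2.2 ^ 2‖
            ≤ ‖(g^[n] w).2.1‖ + ‖(g^[n] w).2.2 ^ 2‖ := norm_sub_le _ _
          _ ≤ N n + N n ^ 2 := by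
              rw [norm_pow]
              have := pow_le_pow_left₀ (norm_nonneg _) hz 2
              linarith
      have h2 : ‖(g^[n] w).2.1 - (g^[n] w).2.2 ^ 2‖ / (1 + δ)
          ≤ ‖(g^[n] w).2.1 - (g^[n] w).2.2 ^ 2‖ :=
        div_le_self (norm_nonneg _) (by linarith)
      nlinarith [h1, h2]
    have hsq : Real.sqrt ‖v‖ ≤ Real.sqrt 2 * N n := by
      calc Real.sqrt ‖v‖ ≤ Real.sqrt (2 * N n ^ 2) := Real.sqrt_le_sqrt hvb
        _ = Real.sqrt 2 * N n := by
            rw [Real.sqrt_mul (by norm_num), Real.sqrt_sq hM0.le]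
    have hnotV := hnot (n+1)
    rw [hg] at hgp
    rw [hgp] at hnotV
    simp only [Vplus, Set.mem_setOf_eq, gt_iff_lt, not_lt] at hnotV ⊢
    -- hnotV : ‖u‖ ≤ max R (max (‖(g^[n] w).2.2‖) ((1+δ) * √(‖v‖)))
    have hub : ‖u‖ ≤ C1 * N n ^ 2 := by
      have h3 : (1 + δ) * Real.sqrt (‖v‖) ≤ C1 * N n ^ 2 := by
        have h4 : (1 + δ) * Real.sqrt ‖v‖ ≤ (1 + δ) * (Real.sqrt 2 * N n) :=
          mul_le_mul_of_nonneg_left hsq hδ1.le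
        have h4b : ((1 + δ) * Real.sqrt 2) * N n ≤ C1 * N n :=
          mul_le_mul_of_nonneg_right (by linarith [hC1.le, hC1.ge]) hM0.le
        have h4c : C1 * N n ≤ C1 * N n ^ 2 :=
          mul_le_mul_of_nonneg_left (by nlinarith [hM1, hM0]) (by linarith)
        calc (1 + δ) * Real.sqrt ‖v‖ ≤ (1 + δ) * (Real.sqrt 2 * N n) := h4
          _ = ((1 + δ) * Real.sqrt 2) * N n := by ring
          _ ≤ C1 * N n := h4b
          _ ≤ C1 * N n ^ 2 := h4c
      have h5 : ‖(g^[n] w).2.2‖ ≤ C1 * N n ^ 2 := by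
        nlinarith [hz]
      have h6 : R ≤ C1 * N n ^ 2 := by nlinarith [hNR n, hN0 n, hN1 n]
      calc ‖u‖ ≤ _ := hnotV
        _ ≤ C1 * N n ^ 2 := max_le h6 (max_le h5 h3)
    have hnrm : ‖g^[n+1] w‖ ≤ C1 * N n ^ 2 := by
      rw [← hg] at hgp
      rw [hgp, Prod.norm_def, Prod.norm_def]
      apply max_le
      · nlinarith [hz]
      · apply max_le
        · nlinarith [hvb]
        · exact hub
    rw [hN]
    apply max_le hnrm
    nlinarith [hNR n, hN0 n, hN1 n]
  set t : ℕ → ℝ := fun n => Real.log (N n) + Real.log C1 with ht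
  have htpos : ∀ n, 0 ≤ t n := by
    intro n
    have h1 : 0 ≤ Real.log (N n) := Real.log_nonneg (hN1 n).le
    have h2 : 0 ≤ Real.log C1 := Real.log_nonneg (by linarith)
    simp only [ht]
    linarith
  have ht2 : ∀ n, t (n+1) ≤ 2 * t n := by
    intro n
    have h1 : Real.log (N (n+1)) ≤ Real.log (C1 * N n ^ 2) :=
      Real.log_le_log (hN0 _) (hstep n)
    rw [Real.log_mul (by linarith : C1 ≠ 0) (pow_ne_zero 2 (ne_of_gt (hN0 n))),
      Real.log_pow] at h1
    simp only [ht]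
    push_cast at h1
    linarith
  have hind : ∀ n, t n ≤ 2 ^ n * t 0 := by
    intro n
    induction n with
    | zero => simp
    | succ n ih =>
      calc t (n+1) ≤ 2 * t n := ht2 n
        _ ≤ 2 * (2 ^ n * t 0) := by linarith
        _ = 2 ^ (n+1) * t 0 := by ring
  have hfb : ∀ n : ℕ, max (Real.log ‖g^[n] w‖) 0 / 3 ^ n ≤ t 0 * (2/3) ^ n := by
    intro n
    have h1 : max (Real.log ‖g^[n] w‖) 0 ≤ t n := by
      apply max_le
      · rcases le_or_gt ‖g^[n] w‖ 1 with h | h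
        · have := Real.log_nonpos (norm_nonneg _) h
          linarith [htpos n, Real.log_nonneg (hN1 n).le,
            Real.log_nonneg (show (1:ℝ) ≤ C1 by linarith)]
        · have h2 : Real.log ‖g^[n] w‖ ≤ Real.log (N n) :=
            Real.log_le_log (by linarith) (hNw n)
          have h3 : 0 ≤ Real.log C1 := Real.log_nonneg (by linarith)
          simp only [ht]
          linarith
      · exact htpos n
    have h2 : max (Real.log ‖g^[n] w‖) 0 / 3 ^ n ≤ t n / 3 ^ n :=
      (div_le_div_iff_of_pos_right (by positivity)).mpr h1
    calc max (Real.log ‖g^[n] w‖) 0 / 3 ^ n ≤ t n / 3 ^ n := h2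
      _ ≤ 2 ^ n * t 0 / 3 ^ n :=
          (div_le_div_iff_of_pos_right (by positivity)).mpr (hind n)
      _ = t 0 * (2/3) ^ n := by
          rw [div_pow]
          ring
  have hf0 : ∀ n : ℕ, 0 ≤ max (Real.log ‖g^[n] w‖) 0 / 3 ^ n := by
    intro n
    apply div_nonneg (le_max_right _ _)
    positivity
  have hlim : Tendsto (fun n : ℕ => t 0 * (2/3 : ℝ) ^ n) atTop (𝓝 0) := by
    have h1 := tendsto_pow_atTop_nhds_zero_of_lt_one
      (by norm_num : (0:ℝ) ≤ 2/3) (by norm_num : (2/3:ℝ) < 1)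
    have h2 := h1.const_mul (t 0)
    simpa using h2
  exact squeeze_zero hf0 hfb hlim

end Stmt6Aux

/-- there exists `R₀ > 1` such that for all `R > R₀`: for every
`w ∈ ℂ³` the limit `G⁻(w) = lim 3^{−n} log⁺‖H⁻ⁿ(w)‖` exists; `G⁻` satisfies
`G⁻(H⁻¹(w)) = 3·G⁻(w)`, and `G⁻(w) = 0` iff `w ∈ K⁻`. -/
theorem stmt6 (a b : ℂ) (ha : a ≠ 0) (hb : b ≠ 0) (δ : ℝ) (hδ : 0 < δ)
    (hbδ : ‖b‖ = 1 + δ) :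
    ∃ R₀ > (1 : ℝ), ∀ R > R₀, ∃ G : ℂ × ℂ × ℂ → ℝ,
      (∀ w, Tendsto
        (fun n : ℕ => max (Real.log ‖(Hinv a b)^[n] w‖) 0 / 3 ^ n)
        atTop (nhds (G w))) ∧
      (∀ w, G (Hinv a b w) = 3 * G w) ∧
      (∀ w, G w = 0 ↔ w ∈ Kminus a b δ R) := by
  classical
  have hA : 0 < ‖a‖ := norm_pos_iff.mpr ha
  have hαpos := Stmt6Aux.alp_pos ha hδ
  have hδ1 : (0:ℝ) < 1 + δ := by linarith
  set c1 : ℝ := δ * (δ + 2) / (1 + δ) ^ 3 with hc1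
  have hc1pos : 0 < c1 := by rw [hc1]; positivity
  set E : ℝ := |Real.log (Stmt6Aux.alp a δ)| / 3 +
      max |Real.log (Stmt6Aux.alp a δ)| |Real.log (Stmt6Aux.bet a)| / 6 + 1 with hE
  refine ⟨max 2 (max (2 / c1) (max (((1 + δ) * Real.sqrt 2 + 2) / Stmt6Aux.alp a δ)
      (Real.exp E))), by norm_num, ?_⟩
  intro R hR
  have hR2 : (2:ℝ) < R := lt_of_le_of_lt (le_max_left _ _) hR
  have hR1 : 1 < R := by linarith
  have hRc : 2 ≤ c1 * R := by
    have h1 : 2 / c1 < R :=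
      lt_of_le_of_lt (le_trans (le_max_left _ _) (le_max_right _ _)) hR
    rw [div_lt_iff₀ hc1pos] at h1
    nlinarith [h1]
  have hRα : (1 + δ) * Real.sqrt 2 + 2 ≤ Stmt6Aux.alp a δ * R := by
    have h1 : ((1 + δ) * Real.sqrt 2 + 2) / Stmt6Aux.alp a δ < R :=
      lt_of_le_of_lt (le_trans (le_trans (le_max_left _ _) (le_max_right _ _))
        (le_max_right _ _)) hR
    rw [div_lt_iff₀ hαpos] at h1
    nlinarith [h1]
  have hRlog : E ≤ Real.log R := by
    have h1 : Real.exp E < R :=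
      lt_of_le_of_lt (le_trans (le_trans (le_max_right _ _) (le_max_right _ _))
        (le_max_right _ _)) hR
    have h2 := Real.log_lt_log (Real.exp_pos E) h1
    rw [Real.log_exp] at h2
    linarith
  rw [hE] at hRlog
  have hex : ∀ w, ∃ L, Tendsto
      (fun n : ℕ => max (Real.log ‖(Hinv a b)^[n] w‖) 0 / 3 ^ n)
      atTop (𝓝 L) ∧ (L = 0 ↔ w ∈ Kminus a b δ R) := by
    intro w
    by_cases hU : w ∈ Uminus a b δ R
    · obtain ⟨n₀, hn₀⟩ := (Stmt6Aux.mem_Uminus_iff a b ha hb δ R w).mp hU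
      obtain ⟨L, hL1, hLt⟩ :=
        Stmt6Aux.escape a b ha hδ hbδ hR1 (by rw [← hc1]; exact hRc) hRα hRlog _ hn₀
      refine ⟨L / 3 ^ n₀, ?_, ?_⟩
      · have hfun : (fun n : ℕ =>
            max (Real.log ‖(Hinv a b)^[n + n₀] w‖) 0 / 3 ^ (n + n₀)) = fun n : ℕ =>
            (max (Real.log ‖(Hinv a b)^[n] ((Hinv a b)^[n₀] w)‖) 0 / 3 ^ n) / 3 ^ n₀ := by
          funext n
          rw [Function.iterate_add_apply, pow_add]
          ring
        have h2 := hLt.div_const ((3:ℝ) ^ n₀)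
        have h3 : Tendsto (fun n : ℕ =>
            max (Real.log ‖(Hinv a b)^[n + n₀] w‖) 0 / 3 ^ (n + n₀)) atTop
            (𝓝 (L / 3 ^ n₀)) := by
          rw [hfun]
          exact h2
        exact (Filter.tendsto_add_atTop_iff_nat n₀).mp h3
      · constructor
        · intro h0
          exfalso
          rw [div_eq_zero_iff] at h0
          rcases h0 with h0 | h0
          · linarith
          · exact pow_ne_zero n₀ (by norm_num : (3:ℝ) ≠ 0) h0
        · intro hK
          exact absurd hU hK
    · have hnot : ∀ n, (Hinv a b)^[n] w ∉ Vplus δ R := fun n hn =>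
        hU ((Stmt6Aux.mem_Uminus_iff a b ha hb δ R w).mpr ⟨n, hn⟩)
      exact ⟨0, Stmt6Aux.bounded a b ha hb hδ hbδ hR1 w hnot,
        by simp [Kminus, Set.mem_compl_iff, hU]⟩
  choose G hG1 hG2 using hex
  refine ⟨G, hG1, ?_, hG2⟩
  intro w
  have h1 : Tendsto (fun n : ℕ =>
      max (Real.log ‖(Hinv a b)^[n] (Hinv a b w)‖) 0 / 3 ^ n) atTop
      (𝓝 (G (Hinv a b w))) := hG1 _
  have h2 : Tendsto (fun n : ℕ =>
      max (Real.log ‖(Hinv a b)^[n+1] w‖) 0 / 3 ^ (n+1)) atTop (𝓝 (G w)) :=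
    (hG1 w).comp (tendsto_add_atTop_nat 1)
  have h3 := h2.const_mul (3:ℝ)
  have h4 : (fun n : ℕ => 3 * (max (Real.log ‖(Hinv a b)^[n+1] w‖) 0 / 3 ^ (n+1)))
      = (fun n : ℕ => max (Real.log ‖(Hinv a b)^[n] (Hinv a b w)‖) 0 / 3 ^ n) := by
    funext n
    rw [Function.iterate_succ_apply, pow_succ]
    ring
  rw [show (fun n : ℕ => (3:ℝ) * (max (Real.log ‖(Hinv a b)^[n+1] w‖) 0 / 3 ^ (n+1)))
    = (fun n : ℕ => max (Real.log ‖(Hinv a b)^[n] (Hinv a b w)‖) 0 / 3 ^ n) from h4] at h3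
  exact tendsto_nhds_unique h1 h3
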